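/- The operator T = (1/(2m)) Σ_{k=1}^{m−1} (m − 2k) R^k on X^m, where R is the circular right shift, is skew: ⟨Tx, x⟩ = 0 for all x ∈ X^m. -/

import Mathlib

open scoped RealInnerProductSpace

variable {X : Type*} [NormedAddCommGroup X] [InnerProductSpace ℝ X] [CompleteSpace X]
variable {m : ℕ} [NeZero m]

/-- The circular right shift `(x₁,…,x_m) ↦ (x_m, x₁,…,x_{m−1})` on `X^m`. -/
def shiftR : PiLp 2 (fun _ : Fin m => X) → PiLp 2 (fun _ : Fin m => X) :=
  fun x => WithLp.toLp 2 (fun j => x (j - 1))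

/-- The operator `T = (1/(2m)) Σ_{k=1}^{m−1} (m − 2k) R^k`. -/
noncomputable def Tskew : PiLp 2 (fun _ : Fin m => X) → PiLp 2 (fun _ : Fin m => X) :=
  fun x => (1 / (2 * (m : ℝ))) •
    ∑ k ∈ Finset.Ico 1 m, (((m : ℝ) - 2 * (k : ℝ)) • (shiftR^[k] x))

open Fin.NatCast Fin.CommRing

lemma shiftR_iterate (x : PiLp 2 (fun _ : Fin m => X)) (k : ℕ) (j : Fin m) :
    shiftR^[k] x j = x (j - (k : Fin m)) := by
  induction k generalizing j with
  | zero => rw [Nat.cast_zero, sub_zero]; rfl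
  | succ n ih =>
    rw [Function.iterate_succ_apply']
    show (shiftR^[n] x) (j - 1) = _
    rw [ih]
    rw [Nat.cast_succ, sub_sub, add_comm]

lemma inner_iter (x : PiLp 2 (fun _ : Fin m => X)) (k : ℕ) :
    (⟪shiftR^[k] x, x⟫ : ℝ) = ∑ j, (⟪x (j - (k : Fin m)), x j⟫ : ℝ) := by
  rw [PiLp.inner_apply]
  exact Finset.sum_congr rfl fun j _ => by rw [shiftR_iterate]

lemma inner_iter_symm (x : PiLp 2 (fun _ : Fin m => X)) (k : ℕ) (hk : k ≤ m) :
    (⟪shiftR^[m - k] x, x⟫ : ℝ) = (⟪shiftR^[k] x, x⟫ : ℝ) := by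
  rw [inner_iter, inner_iter]
  have hc : ((m - k : ℕ) : Fin m) = -(k : Fin m) := by
    rw [Nat.cast_sub hk]
    simp
  rw [hc]
  refine Fintype.sum_equiv (Equiv.addRight (k : Fin m))
    (fun j => (⟪x (j - -(k : Fin m)), x j⟫ : ℝ))
    (fun j => (⟪x (j - (k : Fin m)), x j⟫ : ℝ)) fun j => ?_
  have h1 : j - -(k : Fin m) = j + (k : Fin m) := sub_neg_eq_add j ((k : Fin m))
  have h2 : (Equiv.addRight (k : Fin m)) j - (k : Fin m) = (Equiv.addRight (k : Fin m)) j - (k : Fin m) := rfl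
  show (⟪x (j - -(k : Fin m)), x j⟫ : ℝ) = _
  rw [h1]
  show (⟪x (j + (k : Fin m)), x j⟫ : ℝ) = (⟪x (j + (k : Fin m) - (k : Fin m)), x (j + (k : Fin m))⟫ : ℝ)
  rw [add_sub_cancel_right]
  exact real_inner_comm (x j) (x (j + (k : Fin m)))

/-- `T` is skew: `⟨Tx, x⟩ = 0` for all `x`. -/
theorem stmt_13 (x : PiLp 2 (fun _ : Fin m => X)) :
    (⟪Tskew x, x⟫ : ℝ) = 0 := by
  unfold Tskew
  rw [real_inner_smul_left, sum_inner (𝕜 := ℝ) (E := PiLp 2 (fun _ : Fin m => X))]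
  rw [show (∑ k ∈ Finset.Ico 1 m, ⟪((m : ℝ) - 2 * (k : ℝ)) • (shiftR^[k] x), x⟫) =
      ∑ k ∈ Finset.Ico 1 m, ((m : ℝ) - 2 * (k : ℝ)) * ⟪shiftR^[k] x, x⟫ from
    Finset.sum_congr rfl fun k _ => real_inner_smul_left _ _ _]
  rw [Finset.sum_involution (g := fun k _ => m - k)]
  · ring
  · intro k hk
    rw [Finset.mem_Ico] at hk
    have h1 : 1 ≤ k := hk.1
    have h2 : k < m := hk.2
    rw [inner_iter_symm x k h2.le, Nat.cast_sub h2.le]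
    ring
  · intro k hk hne
    rw [Finset.mem_Ico] at hk
    intro h
    apply hne
    have : (m : ℝ) = 2 * k := by
      have := congrArg (Nat.cast (R := ℝ)) h
      rw [Nat.cast_sub hk.2.le] at this
      linarith
    rw [this]
    ring_nf
  · intro k hk
    rw [Finset.mem_Ico] at hk ⊢
    omega
  · intro k hk
    rw [Finset.mem_Ico] at hk
    omega
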